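/- Let α be a positive quadratic irrational whose continued fraction expansion is purely periodic, α = [\overline{a_0; a_1, …, a_n}], and for 0 ≤ i ≤ n let α_i = [\overline{a_i; a_{i+1}, …, a_n, a_0, …, a_{i−1}}] be its complete quotients. Then there exists a positive integer D such that each α_i can be written as α_i = (R_i + √D)/S_i with integers R_i, S_i satisfying 1 ≤ R_i ≤ ⌊√D⌋, 1 ≤ S_i ≤ R_i + ⌊√D⌋ ≤ 2⌊√D⌋, and D − R_i² = S_i S_{i−1} for 0 ≤ i ≤ n, where S_{−1} := (D − R_0²)/S_0 is an integer. -/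

import Mathlib

open Filter

/-- Partial quotients of the continued fraction expansion: `cfA α n` is `a_n(α)`. -/
noncomputable def cfA : ℝ → ℕ → ℤ
  | α, 0 => ⌊α⌋
  | α, n + 1 => cfA (Int.fract α)⁻¹ n

/-- `M(α) = sup_{n ≥ 1} a_n(α)` as an element of `ℕ∞`. -/
noncomputable def Mq (α : ℝ) : ℕ∞ := ⨆ n : ℕ, ((cfA α (n + 1)).toNat : ℕ∞)

/-- `B(α) = limsup_{n → ∞} a_n(α)` as an element of `ℕ∞`. -/
noncomputable def Bq (α : ℝ) : ℕ∞ := limsup (fun n => ((cfA α n).toNat : ℕ∞)) atTop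

/-- Distance from a real number to the nearest integer. -/
noncomputable def nearestDist (x : ℝ) : ℝ := |x - round x|

/-- Complete quotients of the continued fraction expansion. -/
noncomputable def cq (α : ℝ) : ℕ → ℝ
  | 0 => α
  | n + 1 => (Int.fract (cq α n))⁻¹

/-- Shifted convergent numerators: `cfP α (n+1) = p_n`, `cfP α 0 = p_{-1} = 1`. -/
noncomputable def cfP (α : ℝ) : ℕ → ℤ
  | 0 => 1
  | 1 => ⌊α⌋
  | n + 2 => cfA α (n + 1) * cfP α (n + 1) + cfP α n

/-- Shifted convergent denominators: `cfQ α (n+1) = q_n`, `cfQ α 0 = q_{-1} = 0`. -/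
noncomputable def cfQ (α : ℝ) : ℕ → ℤ
  | 0 => 0
  | 1 => 1
  | n + 2 => cfA α (n + 1) * cfQ α (n + 1) + cfQ α n

/-- Two reals are equivalent if related by an integer Möbius map of determinant `±1`. -/
def CfEquiv (x y : ℝ) : Prop :=
  ∃ a b c d : ℤ, (a * d - b * c = 1 ∨ a * d - b * c = -1) ∧
    y = ((a : ℝ) * x + b) / ((c : ℝ) * x + d)

section GalHelpers

lemma cq_succ (α : ℝ) (i : ℕ) : cq α (i+1) = (Int.fract (cq α i))⁻¹ := rfl

lemma cq_add (α : ℝ) (m k : ℕ) : cq α (m + k) = cq (cq α m) k := by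
  induction k with
  | zero => rfl
  | succ k ih => rw [← Nat.add_assoc, cq_succ, ih]; rfl

lemma irr_fract (x : ℝ) (h : Irrational x) : Irrational (Int.fract x) := by
  unfold Int.fract
  exact h.sub_intCast _

lemma irrational_cq (α : ℝ) (h : Irrational α) : ∀ i, Irrational (cq α i) := by
  intro i
  induction i with
  | zero => exact h
  | succ i ih =>
    rw [cq_succ]
    exact (irr_fract _ ih).inv

lemma irr_div_int (x : ℝ) (h : Irrational x) (k : ℤ) (hk : k ≠ 0) : Irrational (x / k) := by
  have h2 : ((k:ℝ))⁻¹ = ((k:ℚ):ℝ)⁻¹ := by push_cast; ring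
  rw [div_eq_mul_inv, h2, ← Rat.cast_inv]
  exact h.mul_ratCast (by simpa using hk)

/-- One algebraic step of the continued fraction recursion on `(R + t)/S` form. -/
lemma alg_step (t : ℝ) (a : ℤ) (R S R' S' : ℤ) (hS : (S:ℝ) ≠ 0) (hS' : (S':ℝ) ≠ 0)
    (hR' : R' = a * S - R) (hSS : (S:ℝ) * (S':ℝ) = t^2 - (R':ℝ)^2) :
    (((R:ℝ) + t)/S - a)⁻¹ = ((R':ℝ) + t)/S' := by
  have h1 : (t - R') * (t + R') = (S:ℝ) * S' := by rw [hSS]; ring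
  have h2 : t - R' ≠ 0 := by
    intro h0
    rw [h0, zero_mul] at h1
    exact (mul_ne_zero hS hS') h1.symm
  have h3 : ((R:ℝ) + t)/S - a = (t - R')/S := by
    rw [hR']; push_cast; field_simp; ring
  rw [h3, inv_div, div_eq_div_iff h2 hS']
  nlinarith [h1]

noncomputable def galSeq (α : ℝ) (D : ℕ) (p : ℤ × ℤ) : ℕ → ℤ × ℤ
  | 0 => p
  | i + 1 =>
      let R' := ⌊cq α i⌋ * (galSeq α D p i).2 - (galSeq α D p i).1
      (R', ((D : ℤ) - R' ^ 2) / (galSeq α D p i).2)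

lemma galSeq_succ_fst (α : ℝ) (D : ℕ) (p : ℤ × ℤ) (i : ℕ) :
    (galSeq α D p (i+1)).1 = ⌊cq α i⌋ * (galSeq α D p i).2 - (galSeq α D p i).1 := rfl

lemma galSeq_succ_snd (α : ℝ) (D : ℕ) (p : ℤ × ℤ) (i : ℕ) :
    (galSeq α D p (i+1)).2 = ((D : ℤ) - (galSeq α D p (i+1)).1 ^ 2) / (galSeq α D p i).2 := rfl

lemma galSeq_succ (α : ℝ) (D : ℕ) (p : ℤ × ℤ) (i : ℕ) :
    galSeq α D p (i+1) = (⌊cq α i⌋ * (galSeq α D p i).2 - (galSeq α D p i).1,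
      ((D : ℤ) - (⌊cq α i⌋ * (galSeq α D p i).2 - (galSeq α D p i).1) ^ 2) / (galSeq α D p i).2)
    := rfl

lemma myInvSubInv (x y : ℝ) (hx : x ≠ 0) (hy : y ≠ 0) :
    x⁻¹ - y⁻¹ = (y - x)/(x*y) := by
  field_simp

lemma sqrt_ne_sq (D : ℕ) (hD : Irrational (Real.sqrt D)) (m : ℤ) : (D:ℤ) ≠ m^2 := by
  intro h
  have : Real.sqrt D = ((|m| : ℤ) : ℝ) := by
    have : ((D:ℕ):ℝ) = ((m:ℝ))^2 := by exact_mod_cast congrArg (fun z : ℤ => (z:ℝ)) h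
    rw [this, Real.sqrt_sq_eq_abs]
    push_cast; ring
  exact (hD.ne_int |m|) this

lemma gal_inv (α : ℝ) (D : ℕ) (hD : Irrational (Real.sqrt D))
    (R₀ S₀ : ℤ) (hS₀ : S₀ ≠ 0) (hdvd : S₀ ∣ ((D:ℤ) - R₀^2))
    (hα : α = ((R₀:ℝ) + Real.sqrt D)/S₀) :
    ∀ i, (galSeq α D (R₀,S₀) i).2 ≠ 0 ∧
      ((galSeq α D (R₀,S₀) i).2 ∣ ((D:ℤ) - (galSeq α D (R₀,S₀) i).1^2)) ∧
      cq α i = (((galSeq α D (R₀,S₀) i).1 : ℝ) + Real.sqrt D)/((galSeq α D (R₀,S₀) i).2 : ℝ) := by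
  have hDnn : (0:ℝ) ≤ (D:ℝ) := by positivity
  have hsq : Real.sqrt D ^ 2 = (D:ℝ) := Real.sq_sqrt hDnn
  intro i
  induction i with
  | zero => exact ⟨hS₀, hdvd, hα⟩
  | succ i ih =>
    obtain ⟨hS, hdvd', heq⟩ := ih
    set R := (galSeq α D (R₀,S₀) i).1 with hRdef
    set S := (galSeq α D (R₀,S₀) i).2 with hSdef
    set a := ⌊cq α i⌋ with hadef
    set R' := (galSeq α D (R₀,S₀) (i+1)).1 with hR'def
    have hR' : R' = a * S - R := rfl
    have hdvd2 : S ∣ ((D:ℤ) - R'^2) := by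
      have : (D:ℤ) - R'^2 = ((D:ℤ) - R^2) + S * (2*a*R - a^2*S) := by rw [hR']; ring
      rw [this]
      exact dvd_add hdvd' (dvd_mul_right _ _)
    set S' := (galSeq α D (R₀,S₀) (i+1)).2 with hS'def
    have hSS : S * S' = (D:ℤ) - R'^2 := by
      rw [hS'def, galSeq_succ_snd]
      exact Int.mul_ediv_cancel' hdvd2
    have hDne : (D:ℤ) - R'^2 ≠ 0 := sub_ne_zero.mpr (sqrt_ne_sq D hD R')
    have hS'ne : S' ≠ 0 := by
      intro h0
      rw [h0, mul_zero] at hSS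
      exact hDne hSS.symm
    refine ⟨hS'ne, ⟨S, by rw [← hSS]; ring⟩, ?_⟩
    have hSr : (S:ℝ) ≠ 0 := Int.cast_ne_zero.mpr hS
    have hS'r : (S':ℝ) ≠ 0 := Int.cast_ne_zero.mpr hS'ne
    have hSSr : (S:ℝ) * (S':ℝ) = (Real.sqrt D)^2 - (R':ℝ)^2 := by
      rw [hsq]; exact_mod_cast hSS
    rw [cq_succ]
    have : Int.fract (cq α i) = ((R:ℝ) + Real.sqrt D)/S - a := by
      rw [Int.fract, heq, ← heq, ← hadef]
    rw [this]
    exact alg_step (Real.sqrt D) a R S R' S' hSr hS'r hR' hSSr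

lemma rep_unique (D : ℕ) (hD : Irrational (Real.sqrt D)) (R S R' S' : ℤ)
    (hS : S ≠ 0) (hS' : S' ≠ 0)
    (h : ((R:ℝ) + Real.sqrt D)/S = ((R':ℝ) + Real.sqrt D)/S') : R = R' ∧ S = S' := by
  have hSr : (S:ℝ) ≠ 0 := Int.cast_ne_zero.mpr hS
  have hS'r : (S':ℝ) ≠ 0 := Int.cast_ne_zero.mpr hS'
  rw [div_eq_div_iff hSr hS'r] at h
  have key : ((S' - S : ℤ):ℝ) * Real.sqrt D = ((R' * S - R * S' : ℤ):ℝ) := by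
    push_cast; nlinarith [h]
  have hSS' : S = S' := by
    by_contra hne
    have hne' : (S' - S : ℤ) ≠ 0 := by omega
    exact (hD.intCast_mul hne').ne_int _ key
  refine ⟨?_, hSS'⟩
  rw [hSS'] at h
  have h5 : (R:ℝ) * S' = (R':ℝ) * S' := by linarith [h]
  have : (R:ℝ) = R' := mul_right_cancel₀ hS'r h5
  exact_mod_cast this

lemma int_le_sqrt' (D : ℕ) (m : ℤ) (hm : 0 ≤ m) (h : (m:ℝ) < Real.sqrt D) :
    m ≤ (Nat.sqrt D : ℤ) := by
  have h2 : (m:ℝ)^2 < (D:ℝ) := (Real.lt_sqrt (by exact_mod_cast hm)).mp h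
  have h3 : m^2 < (D:ℤ) := by exact_mod_cast h2
  lift m to ℕ using hm
  have h4 : m^2 < D := by exact_mod_cast h3
  have : m ≤ Nat.sqrt D := Nat.le_sqrt.mpr (by nlinarith)
  exact_mod_cast this

end GalHelpers

set_option maxHeartbeats 2000000 in
/-- For a positive quadratic irrational `α` with purely periodic continued fraction of
period length `n + 1` (so that the complete quotients satisfy `α_{n+1} = α_0 = α`), there
is a positive integer `D` such that each complete quotient `α_i = (R_i + √D)/S_i` with
integers `1 ≤ R_i ≤ ⌊√D⌋`, `1 ≤ S_i ≤ R_i + ⌊√D⌋ ≤ 2⌊√D⌋` and `D - R_i² = S_i S_{i-1}`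
for `0 ≤ i ≤ n`, where `S_{-1} = (D - R_0²)/S_0` is an integer. -/
theorem stmt4 (α : ℝ) (hpos : 0 < α) (hirr : Irrational α)
    (hquad : ∃ A B C : ℤ, A ≠ 0 ∧ (A : ℝ) * α ^ 2 + (B : ℝ) * α + (C : ℝ) = 0)
    (n : ℕ) (hper : cq α (n + 1) = α) :
    ∃ (D : ℕ) (R S : ℕ → ℤ) (Sneg : ℤ), 0 < D ∧
      (∀ i ≤ n, cq α i = ((R i : ℝ) + Real.sqrt (D : ℝ)) / (S i : ℝ)) ∧
      (∀ i ≤ n, 1 ≤ R i ∧ R i ≤ (Nat.sqrt D : ℤ)) ∧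
      (∀ i ≤ n, 1 ≤ S i ∧ S i ≤ R i + (Nat.sqrt D : ℤ) ∧
        R i + (Nat.sqrt D : ℤ) ≤ 2 * (Nat.sqrt D : ℤ)) ∧
      ((D : ℤ) - R 0 ^ 2 = S 0 * Sneg) ∧
      (∀ i, 1 ≤ i → i ≤ n → (D : ℤ) - R i ^ 2 = S i * S (i - 1)) := by
  classical
  obtain ⟨A, B, C, hA, heqn⟩ := hquad
  set t : ℝ := 2*(A:ℝ)*α + B with htd
  have htirr : Irrational t := by
    have h1 : Irrational (((2*A : ℤ):ℝ) * α) := hirr.intCast_mul (by omega)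
    have h2 := h1.add_intCast B
    convert h2 using 1
    push_cast [htd]; ring
  have ht0 : t ≠ 0 := fun h => htirr.ne_int 0 (by rw [h]; simp)
  have ht2 : t^2 = ((B^2 - 4*A*C : ℤ) : ℝ) := by push_cast [htd]; linear_combination (4*(A:ℝ)) * heqn
  have hΔpos : 0 < B^2 - 4*A*C := by
    have h0 : (0:ℝ) < t^2 := by positivity
    rw [ht2] at h0
    exact_mod_cast h0
  set D : ℕ := (B^2 - 4*A*C).toNat with hDdef
  have hDΔ : (D:ℤ) = B^2 - 4*A*C := Int.toNat_of_nonneg hΔpos.le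
  have hDpos : 0 < D := by omega
  have hDR : (D:ℝ) = t^2 := by rw [ht2]; exact_mod_cast hDΔ
  have hsqrt : Real.sqrt D = |t| := by rw [hDR, Real.sqrt_sq_eq_abs]
  have hDirr : Irrational (Real.sqrt D) := by
    rcases abs_cases t with ⟨h,_⟩|⟨h,_⟩ <;> rw [hsqrt, h]
    exacts [htirr, htirr.neg]
  obtain ⟨R₀, S₀, hS₀, hdvd0, hα⟩ :
      ∃ R₀ S₀ : ℤ, S₀ ≠ 0 ∧ S₀ ∣ ((D:ℤ) - R₀^2) ∧ α = ((R₀:ℝ) + Real.sqrt D)/S₀ := by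
    rcases ht0.lt_or_gt with hneg | hposi
    · refine ⟨B, -(2*A), by omega, ⟨2*C, by rw [hDΔ]; ring⟩, ?_⟩
      have habs : Real.sqrt D = -t := by rw [hsqrt, abs_of_neg hneg]
      have hAr : (A:ℝ) ≠ 0 := Int.cast_ne_zero.mpr hA
      rw [habs, htd]; push_cast
      field_simp
      ring
    · refine ⟨-B, 2*A, by omega, ⟨-(2*C), by rw [hDΔ]; ring⟩, ?_⟩
      have habs : Real.sqrt D = t := by rw [hsqrt, abs_of_pos hposi]
      have hAr : (A:ℝ) ≠ 0 := Int.cast_ne_zero.mpr hA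
      rw [habs, htd]; push_cast
      field_simp
      ring
  -- basic facts about complete quotients
  have hicq : ∀ i, Irrational (cq α i) := irrational_cq α hirr
  have hfr0 : ∀ i, 0 < Int.fract (cq α i) := by
    intro i
    refine (Int.fract_nonneg _).lt_of_ne' ?_
    intro h0
    exact (irr_fract _ (hicq i)).ne_int 0 (by rw [h0]; simp)
  have hone : ∀ i, 1 < cq α i := by
    have key : ∀ i, 1 < cq α (i+1) := by
      intro i
      rw [cq_succ]
      exact (one_lt_inv₀ (hfr0 i)).mpr (Int.fract_lt_one _)
    intro i
    cases i with
    | zero => rw [show cq α 0 = α from rfl, ← hper]; exact key n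
    | succ i => exact key i
  have ha1 : ∀ i, 1 ≤ ⌊cq α i⌋ := fun i => Int.le_floor.mpr (by exact_mod_cast (hone i).le)
  have hfp : ∀ i, 0 < cq α i - ⌊cq α i⌋ := fun i => hfr0 i
  have hfl : ∀ i, cq α i - ⌊cq α i⌋ < 1 := fun i => Int.fract_lt_one (cq α i)
  -- the sequences R, S
  set R : ℕ → ℤ := fun i => (galSeq α D (R₀,S₀) i).1 with hRdef
  set S : ℕ → ℤ := fun i => (galSeq α D (R₀,S₀) i).2 with hSdef
  have hinv := gal_inv α D hDirr R₀ S₀ hS₀ hdvd0 hα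
  have hSne : ∀ i, S i ≠ 0 := fun i => (hinv i).1
  have hdv : ∀ i, S i ∣ (D:ℤ) - (R i)^2 := fun i => (hinv i).2.1
  have hcq : ∀ i, cq α i = ((R i :ℝ) + Real.sqrt D)/(S i) := fun i => (hinv i).2.2
  have hRrec : ∀ i, R (i+1) = ⌊cq α i⌋ * S i - R i := fun i => rfl
  have hSrec : ∀ i, S (i+1) = ((D:ℤ) - (R (i+1))^2) / S i := fun i => rfl
  have hSS : ∀ i, S i * S (i+1) = (D:ℤ) - (R (i+1))^2 := by
    intro i
    have hdvd2 : S i ∣ (D:ℤ) - (R (i+1))^2 := by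
      have he : (D:ℤ) - (R (i+1))^2
          = ((D:ℤ) - (R i)^2) + S i * (2*⌊cq α i⌋*(R i) - ⌊cq α i⌋^2*(S i)) := by
        rw [hRrec i]; ring
      rw [he]; exact dvd_add (hdv i) (dvd_mul_right _ _)
    rw [hSrec i]; exact Int.mul_ediv_cancel' hdvd2
  -- conjugates
  set β : ℕ → ℝ := fun i => ((R i :ℝ) - Real.sqrt D)/(S i) with hβdef
  have hsq : Real.sqrt D ^ 2 = (D:ℝ) := Real.sq_sqrt (by positivity)
  have hβrec : ∀ i, β (i+1) = (β i - ⌊cq α i⌋)⁻¹ := by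
    intro i
    have h := alg_step (-Real.sqrt D) ⌊cq α i⌋ (R i) (S i) (R (i+1)) (S (i+1))
      (Int.cast_ne_zero.mpr (hSne i)) (Int.cast_ne_zero.mpr (hSne (i+1)))
      (hRrec i) (by rw [neg_sq, hsq]; exact_mod_cast hSS i)
    -- h : ((R i + -√D)/S i - a)⁻¹ = (R (i+1) + -√D)/S (i+1)
    rw [hβdef]
    simp only [sub_eq_add_neg (((R (i+1)):ℝ)) (Real.sqrt D),
      sub_eq_add_neg (((R i):ℝ)) (Real.sqrt D)]
    rw [← h]
  -- periodicity
  have hcqper : ∀ i, cq α (i + (n+1)) = cq α i := by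
    intro i; rw [Nat.add_comm, cq_add, hper]
  have hg1 : galSeq α D (R₀,S₀) (n+1) = galSeq α D (R₀,S₀) 0 := by
    have h := hcq (n+1)
    rw [hper, hα] at h
    obtain ⟨h1, h2⟩ := rep_unique D hDirr (R (n+1)) (S (n+1)) R₀ S₀ (hSne _) hS₀ h.symm
    have : galSeq α D (R₀,S₀) 0 = (R₀, S₀) := rfl
    rw [this]
    exact Prod.ext h1 h2
  have hg : ∀ i, galSeq α D (R₀,S₀) (i + (n+1)) = galSeq α D (R₀,S₀) i := by
    intro i
    induction i with
    | zero => simpa using hg1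
    | succ i ih =>
      have e : i + 1 + (n+1) = (i + (n+1)) + 1 := by omega
      rw [e, galSeq_succ, galSeq_succ, ih, hcqper i]
  have hgm : ∀ s i, galSeq α D (R₀,S₀) (i + s*(n+1)) = galSeq α D (R₀,S₀) i := by
    intro s
    induction s with
    | zero => intro i; simp
    | succ s ih =>
      intro i
      have e : i + (s+1)*(n+1) = (i + s*(n+1)) + (n+1) := by ring
      rw [e, hg, ih]
  have hβper : ∀ s i, β (i + s*(n+1)) = β i := by
    intro s i
    rw [hβdef]
    simp only
    rw [show R (i + s*(n+1)) = R i from congrArg Prod.fst (hgm s i),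
      show S (i + s*(n+1)) = S i from congrArg Prod.snd (hgm s i)]
  -- Galois: some conjugate is negative
  have hβirr : ∀ i, Irrational (β i) := by
    intro i
    have h1 : Irrational (-Real.sqrt D + (R i : ℤ)) := hDirr.neg.add_intCast (R i)
    have h2 := irr_div_int _ h1 (S i) (hSne i)
    have e : β i = (-Real.sqrt D + ((R i : ℤ):ℝ)) / ((S i : ℤ):ℝ) := by
      rw [hβdef]; push_cast; ring_nf
    rw [e]
    exact h2
  have hEx : ∃ j, β j < 0 := by
    by_contra hno
    push_neg at hno
    have hβpos : ∀ i, 0 < β i :=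
      fun i => (hno i).lt_of_ne' (fun h => (hβirr i).ne_int 0 (by simp [h]))
    have hβgt : ∀ i, (⌊cq α i⌋ : ℝ) < β i := by
      intro i
      have h1 := hβpos (i+1)
      rw [hβrec i] at h1
      have h2 : 0 < β i - ⌊cq α i⌋ := inv_pos.mp h1
      linarith
    have hβBelow : ∀ i, β i - ⌊cq α i⌋ < 1 := by
      intro i
      have h1 : 1 < β (i+1) := by
        have := hβgt (i+1)
        have h2 : (1:ℝ) ≤ (⌊cq α (i+1)⌋:ℝ) := by exact_mod_cast ha1 (i+1)
        linarith
      rw [hβrec i] at h1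
      have h2 : 0 < β i - ⌊cq α i⌋ := sub_pos.mpr (hβgt i)
      by_contra h3
      push_neg at h3
      have : (β i - ⌊cq α i⌋)⁻¹ ≤ 1 := inv_le_one_of_one_le₀ h3
      linarith
    set d : ℕ → ℝ := fun i => |cq α i - β i| with hddef
    have hd0 : 0 < d 0 := by
      rw [hddef]
      simp only
      have e : cq α 0 - β 0 = 2*Real.sqrt D/(S 0) := by
        rw [hcq 0, hβdef]
        simp only
        rw [div_sub_div_same]
        ring_nf
      rw [e]
      have hsp : 0 < Real.sqrt D := Real.sqrt_pos.mpr (by exact_mod_cast hDpos)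
      exact abs_pos.mpr (div_ne_zero (by positivity) (Int.cast_ne_zero.mpr (hSne 0)))
    have hstep : ∀ i, 0 < d i → d i < d (i+1) := by
      intro i hdi
      have ha' : 0 < cq α i - ⌊cq α i⌋ := hfp i
      have hb : cq α i - ⌊cq α i⌋ < 1 := hfl i
      have hc : 0 < β i - ⌊cq α i⌋ := sub_pos.mpr (hβgt i)
      have hd' : β i - ⌊cq α i⌋ < 1 := hβBelow i
      have hrecα : cq α (i+1) = (cq α i - ⌊cq α i⌋)⁻¹ := by rw [cq_succ, Int.fract]
      have hkey : cq α (i+1) - β (i+1)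
          = (β i - cq α i)/((cq α i - ⌊cq α i⌋)*(β i - ⌊cq α i⌋)) := by
        have h9 := myInvSubInv (cq α i - (⌊cq α i⌋:ℝ)) (β i - (⌊cq α i⌋:ℝ))
          (ne_of_gt ha') (ne_of_gt hc)
        rw [hrecα, hβrec i, h9]
        congr 1
        ring
      have hde : d (i+1) = d i / ((cq α i - ⌊cq α i⌋)*(β i - ⌊cq α i⌋)) := by
        rw [hddef]
        simp only
        rw [hkey, abs_div, abs_of_pos (mul_pos ha' hc), abs_sub_comm]
      rw [hde]
      have hprod : 0 < (cq α i - ⌊cq α i⌋)*(β i - ⌊cq α i⌋) := mul_pos ha' hc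
      have hprod1 : (cq α i - ⌊cq α i⌋)*(β i - ⌊cq α i⌋) < 1 := by nlinarith
      rw [lt_div_iff₀ hprod]
      nlinarith
    have hposall : ∀ i, 0 < d i := by
      intro i
      induction i with
      | zero => exact hd0
      | succ i ih => exact lt_trans ih (hstep i ih)
    have hlt : d 0 < d (n+1) := by
      have hm : StrictMono d := strictMono_nat_of_lt_succ (fun i => hstep i (hposall i))
      exact hm (Nat.succ_pos n)
    have heqd : d (n+1) = d 0 := by
      rw [hddef]
      simp only
      have e1 : cq α (n+1) = cq α 0 := hper
      have e2 : β (n+1) = β 0 := by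
        rw [hβdef]
        simp only
        rw [show R (n+1) = R 0 from congrArg Prod.fst hg1,
          show S (n+1) = S 0 from congrArg Prod.snd hg1]
      rw [e1, e2]
    linarith
  obtain ⟨j, hj⟩ := hEx
  have hneg_step : ∀ i, β i < 0 → (-1 < β (i+1) ∧ β (i+1) < 0) := by
    intro i hi
    have ha2 : (1:ℝ) ≤ (⌊cq α i⌋:ℝ) := by exact_mod_cast ha1 i
    have h1 : β i - ⌊cq α i⌋ < -1 := by linarith
    have hne : β i - (⌊cq α i⌋:ℝ) ≠ 0 := by linarith
    have hinv' := mul_inv_cancel₀ hne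
    have hlt0 : (β i - (⌊cq α i⌋:ℝ))⁻¹ < 0 := inv_neg''.mpr (by linarith)
    rw [hβrec i]
    refine ⟨?_, hlt0⟩
    nlinarith [hinv', h1, hlt0]
  have hgood : ∀ k, -1 < β (j+1+k) ∧ β (j+1+k) < 0 := by
    intro k
    induction k with
    | zero => exact hneg_step j hj
    | succ k ih => exact hneg_step (j+1+k) ih.2
  have hβall : ∀ i, -1 < β i ∧ β i < 0 := by
    intro i
    have hle : j+1 ≤ (j+1)*(n+1) := Nat.le_mul_of_pos_right _ (Nat.succ_pos n)
    have hk : i + (j+1)*(n+1) = j+1 + (i + (j+1)*(n+1) - (j+1)) := by omega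
    have hgd := hgood (i + (j+1)*(n+1) - (j+1))
    rw [← hk] at hgd
    rw [← hβper (j+1) i]
    exact hgd
  -- conclusions
  have hsqpos : 0 < Real.sqrt D := Real.sqrt_pos.mpr (by exact_mod_cast hDpos)
  have hSpos : ∀ i, 0 < S i := by
    intro i
    have h1 : 0 < cq α i - β i := by linarith [hone i, (hβall i).2]
    have h2 : cq α i - β i = 2*Real.sqrt D/(S i) := by
      rw [hcq i, hβdef]
      simp only
      rw [div_sub_div_same]
      ring_nf
    rw [h2] at h1
    by_contra h3
    push_neg at h3
    have h4 : S i < 0 := lt_of_le_of_ne h3 (hSne i)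
    have h4' : ((S i : ℤ):ℝ) < 0 := by exact_mod_cast h4
    have : 2*Real.sqrt D/(S i : ℝ) < 0 := div_neg_of_pos_of_neg (by positivity) h4'
    linarith
  have hRpos : ∀ i, 1 ≤ R i := by
    intro i
    have h1 : 0 < cq α i + β i := by linarith [hone i, (hβall i).1]
    have h2 : cq α i + β i = 2*(R i)/S i := by
      rw [hcq i, hβdef]
      simp only
      rw [← add_div]
      ring_nf
    rw [h2] at h1
    have hs : (0:ℝ) < (S i : ℝ) := by exact_mod_cast hSpos i
    have h5 := mul_pos h1 hs
    rw [div_mul_cancel₀ _ (ne_of_gt hs)] at h5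
    have h6 : (0:ℝ) < (R i : ℝ) := by linarith
    have : (0:ℤ) < R i := by exact_mod_cast h6
    linarith
  have hRltD : ∀ i, (R i : ℝ) < Real.sqrt D := by
    intro i
    have h1 := (hβall i).2
    have hs : (0:ℝ) < (S i : ℝ) := by exact_mod_cast hSpos i
    rw [hβdef] at h1
    simp only at h1
    rcases div_neg_iff.mp h1 with ⟨_, h⟩ | ⟨h, _⟩
    · linarith
    · linarith
  have hSltRD : ∀ i, (S i : ℝ) < R i + Real.sqrt D := by
    intro i
    have hs : (0:ℝ) < (S i : ℝ) := by exact_mod_cast hSpos i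
    have h1 : 1 < ((R i:ℝ) + Real.sqrt D)/(S i) := by rw [← hcq i]; exact hone i
    exact (one_lt_div hs).mp h1
  have hRle : ∀ i, R i ≤ (Nat.sqrt D : ℤ) := by
    intro i
    exact int_le_sqrt' D (R i) (by linarith [hRpos i]) (hRltD i)
  have hSRle : ∀ i, S i ≤ R i + (Nat.sqrt D:ℤ) := by
    intro i
    rcases le_or_gt (S i - R i) 0 with h | h
    · have h2 : (0:ℤ) ≤ (Nat.sqrt D : ℤ) := Int.ofNat_nonneg _
      linarith
    · have h2 : ((S i - R i : ℤ):ℝ) < Real.sqrt D := by push_cast; linarith [hSltRD i]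
      have := int_le_sqrt' D (S i - R i) (le_of_lt h) h2
      linarith
  obtain ⟨Sneg, hSneg⟩ := hdv 0
  refine ⟨D, R, S, Sneg, hDpos, fun i _ => hcq i, fun i _ => ⟨hRpos i, hRle i⟩,
    fun i _ => ⟨hSpos i, hSRle i, by linarith [hRle i]⟩, hSneg, ?_⟩
  intro i h1 h2
  have e : i - 1 + 1 = i := by omega
  have h3 := hSS (i-1)
  rw [e] at h3
  rw [← h3]
  ring
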